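/- Let K(x,y) be measurable on ℝⁿ×ℝⁿ with the property that for some R > 0 and every x, the function y ↦ K(x,y) satisfies |K(x,y)·φ_j(y−x)| ≤ ‖ℱ^{-1}(φ_j ℱ b(x,·))‖_{L^1} for all j ∈ ℤ, where φ_j(z) = Φ(2^{-j}z) is a homogeneous dyadic partition of unity. Then for any 0 < t ≤ 1 and any locally integrable v, (Σ_{j∈ℤ} ∫_{B(x,2^j)} |v(y)|^t dy · 2^{jn}/|B(x,2^j)| · ‖K(x,·)φ_j(·−x)‖_∞^t)^{1/t} ≤ ‖b(x,·)‖_{Ḃ^{n/t}_{1,t}} · M_t v(x), where M_t v(x) = sup_{r>0} (|B(x,r)|^{-1} ∫_{B(x,r)} |v|^t)^{1/t} and ‖g‖_{Ḃ^{n/t}_{1,t}} = (Σ_{j∈ℤ} 2^{jn t/t} ‖φ_j(D)g‖_{L^1}^t)^{1/t} is the homogeneous Besov norm. -/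

import Mathlib

open MeasureTheory Metric
open scoped ENNReal NNReal

/-- The dyadic-shell estimate in the proof of Marschall's inequality: if for
every `j ∈ ℤ`, `|K(x,y)·φ_j(y−x)| ≤ c_j := ‖ℱ⁻¹(φ_j ℱ b(x,·))‖_{L¹}`, then
`(Σ_j ∫_{B(x,2^j)} |v|^t · 2^{jn}/|B(x,2^j)| · ‖K(x,·)φ_j(·−x)‖_∞^t)^{1/t}
  ≤ ‖b(x,·)‖_{Ḃ^{n/t}_{1,t}} · M_t v(x)`,
where `‖b(x,·)‖_{Ḃ^{n/t}_{1,t}} = (Σ_j 2^{jn} c_j^t)^{1/t}` and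
`M_t v(x) = sup_{r>0} (|B(x,r)|⁻¹ ∫_{B(x,r)} |v|^t)^{1/t}`. -/
theorem stmt_14 (n : ℕ) (t : ℝ) (ht0 : 0 < t) (ht1 : t ≤ 1)
    (x : EuclideanSpace ℝ (Fin n))
    (K : EuclideanSpace ℝ (Fin n) → ℂ)        -- `K(x,·)`
    (φ : ℤ → EuclideanSpace ℝ (Fin n) → ℝ)    -- homogeneous dyadic partition
    (v : EuclideanSpace ℝ (Fin n) → ℂ)
    (hv : MeasureTheory.LocallyIntegrable v volume)
    (c : ℤ → ℝ) (hc : ∀ j, 0 ≤ c j)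
    -- `c j = ‖ℱ⁻¹(φ_j ℱ b(x,·))‖_{L¹}` dominates `K(x,·)` on the `j`-th shell:
    (hK : ∀ (j : ℤ) (y : EuclideanSpace ℝ (Fin n)), ‖K y * (φ j (y - x) : ℂ)‖ ≤ c j) :
    (∑' j : ℤ,
        (∫⁻ y in ball x ((2:ℝ) ^ j), (‖v y‖₊ : ℝ≥0∞) ^ t) *
          ((2 : ℝ≥0∞) ^ ((j : ℝ) * n) * (volume (ball x ((2:ℝ) ^ j)))⁻¹) *
          (⨆ y, (‖K y * (φ j (y - x) : ℂ)‖₊ : ℝ≥0∞)) ^ t) ^ (1/t)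
      ≤ (∑' j : ℤ, (2 : ℝ≥0∞) ^ ((j : ℝ) * n) * (ENNReal.ofReal (c j)) ^ t) ^ (1/t) *
        (⨆ r : ℝ, ⨆ _ : 0 < r,
          ((volume (ball x r))⁻¹ * ∫⁻ y in ball x r, (‖v y‖₊ : ℝ≥0∞) ^ t)) ^ (1/t) := by
  set M : ℝ≥0∞ := ⨆ r : ℝ, ⨆ _ : 0 < r,
      ((volume (ball x r))⁻¹ * ∫⁻ y in ball x r, (‖v y‖₊ : ℝ≥0∞) ^ t) with hM
  have key : (∑' j : ℤ,
        (∫⁻ y in ball x ((2:ℝ) ^ j), (‖v y‖₊ : ℝ≥0∞) ^ t) *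
          ((2 : ℝ≥0∞) ^ ((j : ℝ) * n) * (volume (ball x ((2:ℝ) ^ j)))⁻¹) *
          (⨆ y, (‖K y * (φ j (y - x) : ℂ)‖₊ : ℝ≥0∞)) ^ t)
      ≤ (∑' j : ℤ, (2 : ℝ≥0∞) ^ ((j : ℝ) * n) * (ENNReal.ofReal (c j)) ^ t) * M := by
    rw [← ENNReal.tsum_mul_right]
    refine ENNReal.tsum_le_tsum fun j => ?_
    have hS : (⨆ y, (‖K y * (φ j (y - x) : ℂ)‖₊ : ℝ≥0∞)) ≤ ENNReal.ofReal (c j) := by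
      refine iSup_le fun y => ?_
      rw [show ((‖K y * (φ j (y - x) : ℂ)‖₊ : ℝ≥0∞)) = ENNReal.ofReal ‖K y * (φ j (y - x) : ℂ)‖ from
        (ofReal_norm _).symm]
      exact ENNReal.ofReal_le_ofReal (hK j y)
    have hMle : (volume (ball x ((2:ℝ) ^ j)))⁻¹ *
        (∫⁻ y in ball x ((2:ℝ) ^ j), (‖v y‖₊ : ℝ≥0∞) ^ t) ≤ M := by
      rw [hM]
      refine le_iSup_of_le ((2:ℝ) ^ j) ?_
      exact le_iSup_of_le (by positivity) le_rfl
    calc (∫⁻ y in ball x ((2:ℝ) ^ j), (‖v y‖₊ : ℝ≥0∞) ^ t) *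
          ((2 : ℝ≥0∞) ^ ((j : ℝ) * n) * (volume (ball x ((2:ℝ) ^ j)))⁻¹) *
          (⨆ y, (‖K y * (φ j (y - x) : ℂ)‖₊ : ℝ≥0∞)) ^ t
        = ((2 : ℝ≥0∞) ^ ((j : ℝ) * n) *
            (⨆ y, (‖K y * (φ j (y - x) : ℂ)‖₊ : ℝ≥0∞)) ^ t) *
            ((volume (ball x ((2:ℝ) ^ j)))⁻¹ *
              ∫⁻ y in ball x ((2:ℝ) ^ j), (‖v y‖₊ : ℝ≥0∞) ^ t) := by ring
      _ ≤ ((2 : ℝ≥0∞) ^ ((j : ℝ) * n) * (ENNReal.ofReal (c j)) ^ t) * M := by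
          gcongr
  calc (∑' j : ℤ,
        (∫⁻ y in ball x ((2:ℝ) ^ j), (‖v y‖₊ : ℝ≥0∞) ^ t) *
          ((2 : ℝ≥0∞) ^ ((j : ℝ) * n) * (volume (ball x ((2:ℝ) ^ j)))⁻¹) *
          (⨆ y, (‖K y * (φ j (y - x) : ℂ)‖₊ : ℝ≥0∞)) ^ t) ^ (1/t)
      ≤ ((∑' j : ℤ, (2 : ℝ≥0∞) ^ ((j : ℝ) * n) * (ENNReal.ofReal (c j)) ^ t) * M) ^ (1/t) :=
        ENNReal.rpow_le_rpow key (by positivity)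
    _ = _ := ENNReal.mul_rpow_of_nonneg _ _ (by positivity)
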